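/- Let φ be convex increasing on [0,∞) with φ(0)=0 but φ ∉ Φ_ex (i.e. sup_x φ(1+x)/(φ(1)+φ(x)) = ∞). Then there exists a Borel probability measure μ on ℝ, supported on [0,∞), such that ∫ φ(|x − 0|) dμ(x) < ∞ while ∫ φ(|x − (−1)|) dμ(x) = ∞; i.e., the φ-loss F^φ_μ is finite at 0 but infinite at −1. -/

import Mathlib

open Set Filter

/-- `Φ`: convex, strictly increasing bijections of `[0,∞)` (with `φ 0 = 0`). -/
def Phi (φ : ℝ → ℝ) : Prop :=
  ConvexOn ℝ (Ici 0) φ ∧ StrictMonoOn φ (Ici 0) ∧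
    Set.BijOn φ (Ici 0) (Ici 0) ∧ φ 0 = 0

/-- `γ_φ = sup_{x ≥ 0} φ(1+x)/(φ(1)+φ(x))`, valued in `[0,∞]`. -/
noncomputable def gam (φ : ℝ → ℝ) : ENNReal :=
  ⨆ x : Ici (0:ℝ), ENNReal.ofReal (φ (1 + x) / (φ 1 + φ x))

open MeasureTheory in
theorem stmt_19' (φ : ℝ → ℝ) (hφ : (ConvexOn ℝ (Ici 0) φ ∧ StrictMonoOn φ (Ici 0) ∧
    Set.BijOn φ (Ici 0) (Ici 0) ∧ φ 0 = 0))
    (hnotex : (⨆ x : Ici (0:ℝ), ENNReal.ofReal (φ (1 + x) / (φ 1 + φ x))) = ⊤) :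
    ∃ μ : MeasureTheory.Measure ℝ, MeasureTheory.IsProbabilityMeasure μ ∧
      μ (Set.Iio 0) = 0 ∧
      (∫⁻ x, ENNReal.ofReal (φ |(0:ℝ) - x|) ∂μ) < ⊤ ∧
      (∫⁻ x, ENNReal.ofReal (φ |(-1:ℝ) - x|) ∂μ) = ⊤ := by
  obtain ⟨hconv, hsm, hbij, h0⟩ := hφ
  have hmono : MonotoneOn φ (Ici 0) := hsm.monotoneOn
  have hnn : ∀ y : ℝ, 0 ≤ y → 0 ≤ φ y := fun y hy => by
    have := hmono (self_mem_Ici) hy hy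
    rwa [h0] at this
  have h1 : 0 < φ 1 := by
    have := hsm self_mem_Ici (by norm_num : (1:ℝ) ∈ Ici (0:ℝ)) one_pos
    rwa [h0] at this
  -- choose points with huge ratio
  have hx : ∀ n : ℕ, ∃ y : ℝ, 0 ≤ y ∧ (4:ℝ)^n < φ (1 + y) / (φ 1 + φ y) := by
    intro n
    obtain ⟨⟨y, hy⟩, hlt⟩ := iSup_eq_top.mp hnotex (ENNReal.ofReal ((4:ℝ)^n))
      ENNReal.ofReal_lt_top
    exact ⟨y, hy, (ENNReal.ofReal_lt_ofReal_iff_of_nonneg (by positivity)).mp hlt⟩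
  choose x hx0 hxr using hx
  set d : ℕ → ℝ := fun n => φ 1 + φ (x n) with hd_def
  have hd : ∀ n, 0 < d n := fun n => add_pos_of_pos_of_nonneg h1 (hnn _ (hx0 n))
  have hkey : ∀ n, (4:ℝ)^n * d n < φ (1 + x n) := fun n =>
    (lt_div_iff₀ (hd n)).mp (hxr n)
  set w : ℕ → ℝ := fun n => (1/2:ℝ)^(n+1) * (φ 1 / d n) with hw_def
  have hwpos : ∀ n, 0 < w n := fun n => mul_pos (by positivity) (div_pos h1 (hd n))
  have hw_le : ∀ n, w n ≤ (1/2:ℝ)^(n+1) := fun n => by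
    have : φ 1 / d n ≤ 1 := (div_le_one (hd n)).mpr (le_add_of_nonneg_right (hnn _ (hx0 n)))
    calc w n ≤ (1/2:ℝ)^(n+1) * 1 := by
          exact mul_le_mul_of_nonneg_left this (by positivity)
      _ = (1/2:ℝ)^(n+1) := mul_one _
  set wE : ℕ → ENNReal := fun n => ENNReal.ofReal (w n) with hwE_def
  have half : ENNReal.ofReal ((1/2:ℝ)) = 2⁻¹ := by
    rw [ENNReal.ofReal_div_of_pos (by norm_num)]; simp
  have hgeo : ∑' n : ℕ, ((2:ENNReal)⁻¹)^(n+1) = 1 := by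
    simp_rw [pow_succ, ENNReal.tsum_mul_right, ENNReal.tsum_geometric]
    rw [ENNReal.one_sub_inv_two, inv_inv,
      ENNReal.mul_inv_cancel two_ne_zero ENNReal.ofNat_ne_top]
  have hwE_le : ∀ n, wE n ≤ ((2:ENNReal)⁻¹)^(n+1) := fun n => by
    rw [hwE_def, ← half, ← ENNReal.ofReal_pow (by norm_num)]
    exact ENNReal.ofReal_le_ofReal (hw_le n)
  set S : ENNReal := ∑' n, wE n with hS_def
  have hS_le : S ≤ 1 := by
    rw [hS_def, ← hgeo]
    exact ENNReal.tsum_le_tsum hwE_le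
  have hS_ne : S ≠ ⊤ := (lt_of_le_of_lt hS_le ENNReal.one_lt_top).ne
  set μ : Measure ℝ := (1 - S) • Measure.dirac 0 +
    Measure.sum (fun n => wE n • Measure.dirac (x n)) with hμ_def
  refine ⟨μ, ?_, ?_, ?_, ?_⟩
  · constructor
    rw [hμ_def, Measure.add_apply, Measure.smul_apply,
      Measure.sum_apply _ MeasurableSet.univ]
    simp only [Measure.smul_apply, Measure.dirac_apply_of_mem (mem_univ _), smul_eq_mul,
      mul_one]
    rw [← hS_def, tsub_add_cancel_of_le hS_le]
  · rw [hμ_def, Measure.add_apply, Measure.smul_apply,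
      Measure.sum_apply _ measurableSet_Iio]
    have hz : ∀ y : ℝ, 0 ≤ y → Measure.dirac y (Iio (0:ℝ)) = 0 := fun y hy => by
      rw [Measure.dirac_apply' _ measurableSet_Iio]
      simp [indicator_apply, not_lt.mpr hy]
    simp [hz 0 le_rfl, fun n => hz (x n) (hx0 n)]
  · -- finite at 0
    rw [hμ_def, lintegral_add_measure, lintegral_smul_measure,
      MeasureTheory.lintegral_sum_measure]
    simp_rw [lintegral_smul_measure, lintegral_dirac]
    have e0 : ENNReal.ofReal (φ |(0:ℝ) - 0|) = 0 := by simp [h0]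
    rw [e0, smul_zero, zero_add]
    simp only [smul_eq_mul]
    have hb : ∀ n : ℕ, wE n * ENNReal.ofReal (φ |(0:ℝ) - x n|) ≤
        ENNReal.ofReal (φ 1) * ((2:ENNReal)⁻¹)^(n+1) := fun n => by
      have hxe : |(0:ℝ) - x n| = x n := by
        rw [zero_sub, abs_neg, abs_of_nonneg (hx0 n)]
      rw [hxe, hwE_def, ← ENNReal.ofReal_mul (le_of_lt (hwpos n)), ← half,
        ← ENNReal.ofReal_pow (by norm_num), ← ENNReal.ofReal_mul (le_of_lt h1)]
      apply ENNReal.ofReal_le_ofReal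
      rw [hw_def]
      have hfd : φ (x n) / d n ≤ 1 := (div_le_one (hd n)).mpr
        (le_add_of_nonneg_left (le_of_lt h1))
      calc (1/2:ℝ)^(n+1) * (φ 1 / d n) * φ (x n)
          = φ 1 * (1/2:ℝ)^(n+1) * (φ (x n) / d n) := by ring
        _ ≤ φ 1 * (1/2:ℝ)^(n+1) * 1 :=
            mul_le_mul_of_nonneg_left hfd (by positivity)
        _ = φ 1 * (1/2:ℝ)^(n+1) := mul_one _
    calc ∑' n, wE n * ENNReal.ofReal (φ |(0:ℝ) - x n|)
        ≤ ∑' n : ℕ, ENNReal.ofReal (φ 1) * ((2:ENNReal)⁻¹)^(n+1) :=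
          ENNReal.tsum_le_tsum hb
      _ = ENNReal.ofReal (φ 1) * 1 := by rw [ENNReal.tsum_mul_left, hgeo]
      _ < ⊤ := by simp [ENNReal.ofReal_lt_top]
  · -- infinite at -1
    rw [hμ_def, lintegral_add_measure, lintegral_smul_measure,
      MeasureTheory.lintegral_sum_measure]
    simp_rw [lintegral_smul_measure, lintegral_dirac]
    have hb : ∀ n : ℕ, ENNReal.ofReal (φ 1 / 2) ≤
        wE n * ENNReal.ofReal (φ |(-1:ℝ) - x n|) := fun n => by
      have hxe : |(-1:ℝ) - x n| = 1 + x n := by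
        rw [abs_of_nonpos (by linarith [hx0 n])]; ring
      rw [hxe, hwE_def, ← ENNReal.ofReal_mul (le_of_lt (hwpos n))]
      apply ENNReal.ofReal_le_ofReal
      have h2 : w n * ((4:ℝ)^n * d n) ≤ w n * φ (1 + x n) :=
        mul_le_mul_of_nonneg_left (le_of_lt (hkey n)) (le_of_lt (hwpos n))
      have h3 : φ 1 / 2 ≤ w n * ((4:ℝ)^n * d n) := by
        have hdne : d n ≠ 0 := ne_of_gt (hd n)
        have heq : w n * ((4:ℝ)^n * d n) = φ 1 * (4:ℝ)^n / (2:ℝ)^(n+1) := by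
          rw [hw_def]
          field_simp
          ring_nf
          rw [← mul_pow]; norm_num
        have hAB : (2:ℝ)^(n+1) ≤ 2 * (4:ℝ)^n := by
          rw [pow_succ]
          have : (2:ℝ)^n ≤ (4:ℝ)^n := pow_le_pow_left₀ (by norm_num) (by norm_num) n
          linarith
        rw [heq, div_le_div_iff₀ (by norm_num) (by positivity)]
        nlinarith [h1.le, pow_pos (by norm_num : (0:ℝ) < 4) n]
      exact h3.trans h2
    have htop : ∑' n, wE n * ENNReal.ofReal (φ |(-1:ℝ) - x n|) = ⊤ := by
      refine top_le_iff.mp ?_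
      calc (⊤:ENNReal) = ∑' _ : ℕ, ENNReal.ofReal (φ 1 / 2) :=
            (ENNReal.tsum_const_eq_top_of_ne_zero
              (ENNReal.ofReal_pos.mpr (by positivity)).ne').symm
        _ ≤ _ := ENNReal.tsum_le_tsum hb
    simp [htop]

/-- If `φ ∈ Φ` but `φ ∉ Φ_ex` (i.e. `γ_φ = ∞`), then there is a Borel
probability measure `μ` on `ℝ`, supported on `[0,∞)`, whose φ-loss is finite
at `0` but infinite at `−1`. -/
theorem stmt_19 (φ : ℝ → ℝ) (hφ : Phi φ) (hnotex : gam φ = ⊤) :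
    ∃ μ : MeasureTheory.Measure ℝ, MeasureTheory.IsProbabilityMeasure μ ∧
      μ (Set.Iio 0) = 0 ∧
      (∫⁻ x, ENNReal.ofReal (φ |(0:ℝ) - x|) ∂μ) < ⊤ ∧
      (∫⁻ x, ENNReal.ofReal (φ |(-1:ℝ) - x|) ∂μ) = ⊤ :=
  stmt_19' φ hφ hnotex
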